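/- Let A be a simple C*-algebra and (a_λ) a bounded increasing net of positive elements of A converging in the strong topology of the second dual A** to an element a of the center Z(A**). Then a is a scalar multiple of the identity. -/

import Mathlib

section Aux

open Filter Polynomial

variable {H : Type*} [NormedAddCommGroup H] [InnerProductSpace ℂ H] [CompleteSpace H]

lemma cfc_mem_closure_aeval (T : H →L[ℂ] H) (hT : IsSelfAdjoint T) (f : ℝ → ℝ)
    (hf : Continuous f) :
    cfc f T ∈ closure (Set.range fun p : ℝ[X] => aeval T p) := by
  rw [cfc_apply f T hT hf.continuousOn]
  have h2 : (⟨_, hf.continuousOn.restrict⟩ : C(spectrum ℝ T, ℝ)) ∈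
      closure (polynomialFunctions (spectrum ℝ T) : Set C(spectrum ℝ T, ℝ)) := by
    rw [← Subalgebra.topologicalClosure_coe, polynomialFunctions.topologicalClosure]
    exact Set.mem_univ _
  refine map_mem_closure (cfcHom_continuous hT) h2 ?_
  rintro g hg
  rw [polynomialFunctions_coe] at hg
  obtain ⟨p, rfl⟩ := hg
  refine ⟨p, ?_⟩
  have h3 := cfc_polynomial p T hT
  rw [cfc_apply _ T hT (by fun_prop)] at h3
  show aeval T p = _
  rw [← h3]
  congr 1

lemma commute_cfc_of_commute {T S : H →L[ℂ] H} (hT : IsSelfAdjoint T) {f : ℝ → ℝ}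
    (hf : Continuous f) (hS : Commute S T) : Commute S (cfc f T) := by
  have hcl : IsClosed {x : H →L[ℂ] H | Commute S x} := by
    have : {x : H →L[ℂ] H | Commute S x} = {x : H →L[ℂ] H | S * x = x * S} := rfl
    rw [this]
    exact isClosed_eq (continuous_const.mul continuous_id) (continuous_id.mul continuous_const)
  have hsub : (Set.range fun p : ℝ[X] => aeval T p) ⊆ {x | Commute S x} := by
    rintro - ⟨p, rfl⟩
    induction p using Polynomial.induction_on with
    | C r => simp only [aeval_C]; exact (Algebra.commutes r S).symm
    | add p q hp hq => simpa [map_add] using hp.add_right hq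
    | monomial n r hp =>
      have : aeval T (C r * X ^ (n + 1)) = aeval T (C r * X ^ n) * T := by
        simp [map_mul, map_pow, pow_succ, mul_assoc]
      show Commute S (aeval T (C r * X ^ (n + 1)))
      rw [this]
      exact hp.mul_right hS
  exact closure_minimal hsub hcl (cfc_mem_closure_aeval T hT f hf)

lemma cfc_mem_of_mem {A : StarSubalgebra ℂ (H →L[ℂ] H)} (hclosed : IsClosed (A : Set (H →L[ℂ] H)))
    {T : H →L[ℂ] H} (hTA : T ∈ A) (hT : IsSelfAdjoint T) {f : ℝ → ℝ} (hf : Continuous f) :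
    cfc f T ∈ A := by
  have hsub : (Set.range fun p : ℝ[X] => aeval T p) ⊆ (A : Set (H →L[ℂ] H)) := by
    rintro - ⟨p, rfl⟩
    induction p using Polynomial.induction_on with
    | C r =>
      simpa [aeval_C, IsScalarTower.algebraMap_apply ℝ ℂ (H →L[ℂ] H)] using
        A.algebraMap_mem ((algebraMap ℝ ℂ) r)
    | add p q hp hq => simpa [map_add] using add_mem hp hq
    | monomial n r hp =>
      have : aeval T (C r * X ^ (n + 1)) = aeval T (C r * X ^ n) * T := by
        simp [map_mul, map_pow, pow_succ, mul_assoc]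
      show aeval T (C r * X ^ (n + 1)) ∈ A
      rw [this]
      exact mul_mem hp hTA
  exact closure_minimal hsub hclosed (cfc_mem_closure_aeval T hT f hf)

/-- A strong limit of eventually positive operators is positive. -/
lemma isPositive_of_tendsto {ι : Type*} [Preorder ι] [IsDirected ι (· ≤ ·)] [Nonempty ι]
    {b : ι → H →L[ℂ] H} {S : H →L[ℂ] H} (hS : IsSelfAdjoint S)
    (hconv : ∀ x : H, Tendsto (fun i => b i x) atTop (nhds (S x)))
    (hev : ∀ x : H, ∀ᶠ i in atTop, 0 ≤ RCLike.re (inner ℂ (b i x) x : ℂ)) :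
    S.IsPositive := by
  refine ⟨ContinuousLinearMap.isSelfAdjoint_iff_isSymmetric.mp hS, fun x => ?_⟩
  have ht : Tendsto (fun i => RCLike.re (inner ℂ (b i x) x : ℂ)) atTop
      (nhds (RCLike.re (inner ℂ (S x) x : ℂ))) :=
    (RCLike.continuous_re.tendsto _).comp ((hconv x).inner tendsto_const_nhds)
  exact ge_of_tendsto ht (hev x)

end Aux

set_option maxHeartbeats 1000000 in
/-- Let `A` be a simple C*-algebra (realized faithfully and
nondegenerately on a Hilbert space `H`), and `(a i)` a bounded increasing net of
positive elements of `A` converging in the strong (operator) topology to an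
element `T` of the center of the enveloping von Neumann algebra of `A`
(i.e. `T` commutes with `A` and with the commutant of `A`).  Then `T` is a
scalar multiple of the identity. -/
theorem stmt_0 {H : Type*} [NormedAddCommGroup H] [InnerProductSpace ℂ H] [CompleteSpace H]
    (A : StarSubalgebra ℂ (H →L[ℂ] H)) (hclosed : IsClosed (A : Set (H →L[ℂ] H)))
    (hfaithful_nondeg :
      Dense (Submodule.span ℂ {y : H | ∃ b : A, ∃ x : H, (b : H →L[ℂ] H) x = y} : Set H))
    (hsimple : ∀ I : TwoSidedIdeal A, IsClosed (I : Set A) → I = ⊥ ∨ I = ⊤)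
    {ι : Type*} [Preorder ι] [IsDirected ι (· ≤ ·)] [Nonempty ι]
    (a : ι → A)
    (hpos : ∀ i, (a i : H →L[ℂ] H).IsPositive)
    (hmono : ∀ i j, i ≤ j → ((a j : H →L[ℂ] H) - (a i : H →L[ℂ] H)).IsPositive)
    (hbdd : ∃ C : ℝ, ∀ i, ‖(a i : H →L[ℂ] H)‖ ≤ C)
    (T : H →L[ℂ] H)
    (hconv : ∀ x : H,
      Filter.Tendsto (fun i => (a i : H →L[ℂ] H) x) Filter.atTop (nhds (T x)))
    (hT1 : ∀ b : A, T * (b : H →L[ℂ] H) = (b : H →L[ℂ] H) * T)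
    (hT2 : ∀ S : H →L[ℂ] H, (∀ b : A, S * (b : H →L[ℂ] H) = (b : H →L[ℂ] H) * S) →
      T * S = S * T) :
    ∃ c : ℂ, T = c • (1 : H →L[ℂ] H) := by
  classical
  rcases subsingleton_or_nontrivial H with hH | hH
  · exact ⟨0, by ext x; exact Subsingleton.elim _ _⟩
  have hnt : Nontrivial (H →L[ℂ] H) := by
    obtain ⟨x, hx⟩ := exists_ne (0 : H)
    refine ⟨1, 0, fun hc => hx ?_⟩
    simpa using congrArg (fun f : H →L[ℂ] H => f x) hc
  -- `T` is selfadjoint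
  have hTsa : IsSelfAdjoint T := by
    rw [ContinuousLinearMap.isSelfAdjoint_iff_isSymmetric]
    intro x y
    have h1 : Filter.Tendsto (fun i => (inner ℂ ((a i : H →L[ℂ] H) x) y : ℂ)) Filter.atTop
        (nhds (inner ℂ (T x) y)) := (hconv x).inner tendsto_const_nhds
    have h2 : Filter.Tendsto (fun i => (inner ℂ x ((a i : H →L[ℂ] H) y) : ℂ)) Filter.atTop
        (nhds (inner ℂ x (T y))) := Filter.Tendsto.inner tendsto_const_nhds (hconv y)
    have heq : ∀ i, (inner ℂ ((a i : H →L[ℂ] H) x) y : ℂ) = inner ℂ x ((a i : H →L[ℂ] H) y) :=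
      fun i => (ContinuousLinearMap.isSelfAdjoint_iff_isSymmetric.mp (hpos i).isSelfAdjoint) x y
    exact tendsto_nhds_unique (h1.congr heq) h2
  -- each `a i ≤ T`
  have hle : ∀ i, (a i : H →L[ℂ] H) ≤ T := by
    intro i
    rw [← sub_nonneg, ContinuousLinearMap.nonneg_iff_isPositive]
    refine isPositive_of_tendsto (b := fun j => (a j : H →L[ℂ] H) - (a i : H →L[ℂ] H))
      (hTsa.sub (hpos i).isSelfAdjoint) (fun x => ?_) (fun x => ?_)
    · exact (hconv x).sub tendsto_const_nhds
    · exact Filter.eventually_atTop.mpr ⟨i, fun j hj => (hmono i j hj).2 x⟩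
  -- main dichotomy on the real spectrum of `T`
  by_cases hsep : ∀ x ∈ spectrum ℝ T, ∀ y ∈ spectrum ℝ T, x = y
  · -- spectrum is (at most) a single point: `T` is scalar
    obtain ⟨c, hc⟩ : ∃ c : ℝ, (spectrum ℝ T).EqOn id (fun _ => c) := by
      rcases (spectrum ℝ T).eq_empty_or_nonempty with he | ⟨c, hc⟩
      · exact ⟨0, by rw [he]; exact fun x hx => absurd hx (Set.notMem_empty x)⟩
      · exact ⟨c, fun x hx => hsep x hx c hc⟩
    refine ⟨(c : ℂ), ?_⟩
    have h1 : T = cfc (fun _ : ℝ => c) T := by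
      conv_lhs => rw [← cfc_id ℝ T hTsa]
      exact cfc_congr hc
    rw [h1, cfc_const c T hTsa, Algebra.algebraMap_eq_smul_one]
    rw [show ((c : ℂ) • (1 : H →L[ℂ] H)) = c • (1 : H →L[ℂ] H) by
      rw [← algebraMap_smul ℂ c (1 : H →L[ℂ] H), Complex.coe_algebraMap]]
  · exfalso
    push_neg at hsep
    obtain ⟨s', hs', t', ht', hne⟩ := hsep
    obtain ⟨s, hs, t, ht, hst⟩ : ∃ s ∈ spectrum ℝ T, ∃ t ∈ spectrum ℝ T, s < t := by
      rcases hne.lt_or_gt with h | h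
      · exact ⟨s', hs', t', ht', h⟩
      · exact ⟨t', ht', s', hs', h⟩
    set δ : ℝ := (t - s) / 3 with hδ
    have hδpos : 0 < δ := by rw [hδ]; linarith
    set l₁ : ℝ := s + δ with hl₁
    set l₂ : ℝ := s + 2 * δ with hl₂
    have hsl₁ : s < l₁ := by rw [hl₁]; linarith
    have hl₁l₂ : l₁ < l₂ := by rw [hl₂, hl₁]; linarith
    have hl₂t : l₂ < t := by rw [hl₂, hδ]; linarith
    -- the two functions
    set h : ℝ → ℝ := fun x => max 0 (min 1 ((l₁ - x) / (l₁ - s))) with hh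
    set g : ℝ → ℝ := fun x => max 0 (x - l₂) with hg
    have hcont : Continuous h := by
      rw [hh]
      apply continuous_const.max
      exact continuous_const.min ((continuous_const.sub continuous_id).div_const _)
    have gcont : Continuous g := by
      rw [hg]; exact continuous_const.max (continuous_id.sub continuous_const)
    have hs1 : h s = 1 := by
      rw [hh]
      simp only
      rw [div_self (ne_of_gt (by linarith : (0:ℝ) < l₁ - s))]
      norm_num
    have hzero : ∀ x : ℝ, l₁ ≤ x → h x = 0 := by
      intro x hx
      rw [hh]
      simp only
      rw [max_eq_left]
      refine (min_le_right _ _).trans ?_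
      exact div_nonpos_iff.mpr (Or.inr ⟨by linarith, by linarith⟩)
    have hnonneg : ∀ x : ℝ, 0 ≤ h x := fun x => le_max_left _ _
    have gzero : ∀ x : ℝ, x ≤ l₂ → g x = 0 := fun x hx => by
      rw [hg]; simp only; rw [max_eq_left]; linarith
    have gnonneg : ∀ x : ℝ, 0 ≤ g x := fun x => le_max_left _ _
    have gpos : ∀ x : ℝ, l₂ < x → 0 < g x := fun x hx => by
      rw [hg]; simp only; rw [max_eq_right] <;> linarith
    -- the operators
    set Q : H →L[ℂ] H := cfc h T with hQ
    have hQsa : IsSelfAdjoint Q := cfc_predicate h T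
    have hQmove : ∀ u v : H, (inner ℂ (Q u) v : ℂ) = inner ℂ u (Q v) :=
      fun u v => (ContinuousLinearMap.isSelfAdjoint_iff_isSymmetric.mp hQsa) u v
    -- Q commutes with every element of A
    have hQcomm : ∀ b : A, Commute (b : H →L[ℂ] H) Q :=
      fun b => commute_cfc_of_commute hTsa hcont ((hT1 b).symm)
    have hTQ : Commute T Q := commute_cfc_of_commute hTsa hcont (Commute.refl T)
    -- key inequality 1 : T * (Q * Q) ≤ l₁ • (Q * Q)
    have key1 : T * (Q * Q) ≤ l₁ • (Q * Q) := by
      have e1 : T * (Q * Q) = cfc (fun x : ℝ => x * (h x * h x)) T := by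
        rw [cfc_mul (fun x : ℝ => x) (fun x => h x * h x) T continuous_id.continuousOn
          ((hcont.mul hcont).continuousOn), cfc_id' ℝ T hTsa,
          cfc_mul h h T hcont.continuousOn hcont.continuousOn]
      have e2 : l₁ • (Q * Q) = cfc (fun x : ℝ => l₁ * (h x * h x)) T := by
        rw [cfc_const_mul l₁ (fun x => h x * h x) T ((hcont.mul hcont).continuousOn),
          cfc_mul h h T hcont.continuousOn hcont.continuousOn]
      rw [e1, e2]
      refine cfc_mono (fun x _ => ?_) ?_ ?_
      · rcases le_or_gt x l₁ with hx | hx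
        · exact mul_le_mul_of_nonneg_right hx (mul_nonneg (hnonneg x) (hnonneg x))
        · rw [hzero x hx.le]; simp
      · exact (continuous_id.mul (hcont.mul hcont)).continuousOn
      · exact (continuous_const.mul (hcont.mul hcont)).continuousOn
    -- conclusion : (cfc g (a i)) * Q = 0 for every i
    have keyzero : ∀ i, cfc g (a i : H →L[ℂ] H) * Q = 0 := by
      intro i
      set P : H →L[ℂ] H := (a i : H →L[ℂ] H) with hP
      set r : H →L[ℂ] H := cfc g P with hr
      have hPsa : IsSelfAdjoint P := (hpos i).isSelfAdjoint
      have hrsa : IsSelfAdjoint r := cfc_predicate g P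
      have hrmove : ∀ u v : H, (inner ℂ (r u) v : ℂ) = inner ℂ u (r v) :=
        fun u v => (ContinuousLinearMap.isSelfAdjoint_iff_isSymmetric.mp hrsa) u v
      have hQP : Commute Q P := (hQcomm (a i)).symm
      have hrP : Commute P r := commute_cfc_of_commute hPsa gcont (Commute.refl P)
      have hrQ : Commute Q r := commute_cfc_of_commute hPsa gcont hQP
      -- key inequality 2 : l₂ • (r * r) ≤ P * (r * r)
      have key2 : l₂ • (r * r) ≤ P * (r * r) := by
        have e1 : P * (r * r) = cfc (fun x : ℝ => x * (g x * g x)) P := by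
          rw [cfc_mul (fun x : ℝ => x) (fun x => g x * g x) P continuous_id.continuousOn
            ((gcont.mul gcont).continuousOn), cfc_id' ℝ P hPsa,
            cfc_mul g g P gcont.continuousOn gcont.continuousOn]
        have e2 : l₂ • (r * r) = cfc (fun x : ℝ => l₂ * (g x * g x)) P := by
          rw [cfc_const_mul l₂ (fun x => g x * g x) P ((gcont.mul gcont).continuousOn),
            cfc_mul g g P gcont.continuousOn gcont.continuousOn]
        rw [e1, e2]
        refine cfc_mono (fun x _ => ?_) ?_ ?_
        · rcases le_or_gt x l₂ with hx | hx
          · rw [gzero x hx]; simp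
          · exact mul_le_mul_of_nonneg_right hx.le (mul_nonneg (gnonneg x) (gnonneg x))
        · exact (continuous_const.mul (gcont.mul gcont)).continuousOn
        · exact (continuous_id.mul (gcont.mul gcont)).continuousOn
      -- conjugated inequality
      have cQPQ : Q * P * Q ≤ l₁ • (Q * Q) := by
        have h1 : Q * P * Q ≤ Q * T * Q := by
          have := star_left_conjugate_le_conjugate (hle i) Q
          rwa [hQsa.star_eq] at this
        refine h1.trans ?_
        have h2 : Q * T * Q = T * (Q * Q) := by
          rw [show Q * T = T * Q from hTQ.symm.eq, mul_assoc]
        rw [h2]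
        exact key1
      -- evaluate on vectors
      have hyzero : ∀ x : H, Q (r x) = 0 := by
        intro x
        set y : H := Q (r x) with hy
        have hyy : r (Q x) = y := by
          have := ContinuousLinearMap.ext_iff.mp hrQ.eq x
          simpa [ContinuousLinearMap.mul_apply] using this.symm
        -- upper bound
        have up : RCLike.re (inner ℂ (P y) y : ℂ) ≤ l₁ * ‖y‖ ^ 2 := by
          have h0 : 0 ≤ ((l₁ • (Q * Q) - Q * P * Q) : H →L[ℂ] H).reApplyInnerSelf (r x) :=
            (ContinuousLinearMap.nonneg_iff_isPositive _ |>.mp (sub_nonneg.mpr cQPQ)).2 (r x)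
          rw [ContinuousLinearMap.reApplyInnerSelf_apply] at h0
          have e : ((l₁ • (Q * Q) - Q * P * Q) : H →L[ℂ] H) (r x) =
              l₁ • (Q (Q (r x))) - Q (P (Q (r x))) := by
            simp [ContinuousLinearMap.sub_apply, ContinuousLinearMap.smul_apply,
              ContinuousLinearMap.mul_apply]
          rw [e, inner_sub_left, map_sub] at h0
          have e1 : RCLike.re (inner ℂ (l₁ • (Q (Q (r x)))) (r x) : ℂ) = l₁ * ‖y‖ ^ 2 := by
            rw [RCLike.real_smul_eq_coe_smul (K := ℂ), inner_smul_real_left, RCLike.smul_re,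
              hQmove (Q (r x)) (r x)]
            simp [inner_self_eq_norm_sq]
            left; rw [← Complex.ofReal_pow, Complex.ofReal_re]
          have e2 : (inner ℂ (Q (P (Q (r x)))) (r x) : ℂ) = inner ℂ (P y) y := by
            rw [hQmove (P (Q (r x))) (r x)]
          rw [e1, e2] at h0
          linarith
        -- lower bound
        have lo : l₂ * ‖y‖ ^ 2 ≤ RCLike.re (inner ℂ (P y) y : ℂ) := by
          have h0 : 0 ≤ ((P * (r * r) - l₂ • (r * r)) : H →L[ℂ] H).reApplyInnerSelf (Q x) :=
            (ContinuousLinearMap.nonneg_iff_isPositive _ |>.mp (sub_nonneg.mpr key2)).2 (Q x)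
          rw [ContinuousLinearMap.reApplyInnerSelf_apply] at h0
          have e : ((P * (r * r) - l₂ • (r * r)) : H →L[ℂ] H) (Q x) =
              P (r (r (Q x))) - l₂ • (r (r (Q x))) := by
            simp [ContinuousLinearMap.sub_apply, ContinuousLinearMap.smul_apply,
              ContinuousLinearMap.mul_apply]
          rw [e, inner_sub_left, map_sub] at h0
          have hPr_pt : P (r (r (Q x))) = r (P (r (Q x))) := by
            have := ContinuousLinearMap.ext_iff.mp hrP.eq (r (Q x))
            simpa [ContinuousLinearMap.mul_apply] using this
          have e1 : (inner ℂ (P (r (r (Q x)))) (Q x) : ℂ) = inner ℂ (P y) y := by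
            rw [hPr_pt, hrmove (P (r (Q x))) (Q x), hyy]
          have e2 : RCLike.re (inner ℂ (l₂ • (r (r (Q x)))) (Q x) : ℂ) = l₂ * ‖y‖ ^ 2 := by
            rw [RCLike.real_smul_eq_coe_smul (K := ℂ), inner_smul_real_left, RCLike.smul_re,
              hrmove (r (Q x)) (Q x), hyy]
            simp [inner_self_eq_norm_sq]
            left; rw [← Complex.ofReal_pow, Complex.ofReal_re]
          rw [e1, e2] at h0
          linarith
        have hmid : l₂ * ‖y‖ ^ 2 ≤ l₁ * ‖y‖ ^ 2 := lo.trans up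
        have hy2 : ‖y‖ ^ 2 ≤ 0 := by
          by_contra hpos'
          push_neg at hpos'
          have := mul_lt_mul_of_pos_right hl₁l₂ hpos'
          linarith
        have hynorm : ‖y‖ = 0 := le_antisymm (by
          have := sq_nonneg ‖y‖
          nlinarith [norm_nonneg y]) (norm_nonneg y)
        rwa [norm_eq_zero] at hynorm
      -- turn into operator identity
      have hQr0 : Q * r = 0 := ContinuousLinearMap.ext fun x => by
        simpa [ContinuousLinearMap.mul_apply] using hyzero x
      rw [← hrQ.eq]
      exact hQr0
    -- membership of cfc g (a i) in A
    have hmem : ∀ i, cfc g (a i : H →L[ℂ] H) ∈ A :=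
      fun i => cfc_mem_of_mem hclosed (a i).2 (hpos i).isSelfAdjoint gcont
    -- the closed two-sided ideal
    let Jc : Set A := {b : A | (b : H →L[ℂ] H) * Q = 0}
    have hJc_zero : (0 : A) ∈ Jc := by
      show ((0 : A) : H →L[ℂ] H) * Q = 0
      rw [ZeroMemClass.coe_zero, zero_mul]
    have hJc_add : ∀ {x y : A}, x ∈ Jc → y ∈ Jc → x + y ∈ Jc := by
      intro x y hx hy
      show ((x + y : A) : H →L[ℂ] H) * Q = 0
      rw [AddMemClass.coe_add, add_mul]
      rw [show ((x : H →L[ℂ] H)) * Q = 0 from hx, show ((y : H →L[ℂ] H)) * Q = 0 from hy,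
        add_zero]
    have hJc_neg : ∀ {x : A}, x ∈ Jc → -x ∈ Jc := by
      intro x hx
      show ((-x : A) : H →L[ℂ] H) * Q = 0
      rw [NegMemClass.coe_neg, neg_mul, show ((x : H →L[ℂ] H)) * Q = 0 from hx, neg_zero]
    have hJc_mull : ∀ {x y : A}, y ∈ Jc → x * y ∈ Jc := by
      intro x y hy
      show ((x * y : A) : H →L[ℂ] H) * Q = 0
      rw [MulMemClass.coe_mul, mul_assoc, show ((y : H →L[ℂ] H)) * Q = 0 from hy, mul_zero]
    have hJc_mulr : ∀ {x y : A}, x ∈ Jc → x * y ∈ Jc := by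
      intro x y hx
      show ((x * y : A) : H →L[ℂ] H) * Q = 0
      rw [MulMemClass.coe_mul, mul_assoc, (hQcomm y).eq, ← mul_assoc,
        show ((x : H →L[ℂ] H)) * Q = 0 from hx, zero_mul]
    let J : TwoSidedIdeal A := TwoSidedIdeal.mk' Jc hJc_zero hJc_add hJc_neg hJc_mull hJc_mulr
    have hJmem : ∀ x : A, x ∈ J ↔ (x : H →L[ℂ] H) * Q = 0 := fun x =>
      TwoSidedIdeal.mem_mk' Jc hJc_zero hJc_add hJc_neg hJc_mull hJc_mulr x
    have hJclosed : IsClosed (J : Set A) := by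
      have hset : (J : Set A) = (fun b : A => (b : H →L[ℂ] H) * Q) ⁻¹' {0} := by
        ext x
        simp only [SetLike.mem_coe, hJmem x, Set.mem_preimage, Set.mem_singleton_iff]
      rw [hset]
      exact IsClosed.preimage (continuous_subtype_val.mul continuous_const) isClosed_singleton
    rcases hsimple J hJclosed with hbot | htop
    · -- J = ⊥ : then a i ≤ l₂, so T ≤ l₂ < t, contradiction
      have hr0 : ∀ i, cfc g (a i : H →L[ℂ] H) = 0 := by
        intro i
        have hmemJ : (⟨cfc g (a i : H →L[ℂ] H), hmem i⟩ : A) ∈ J := (hJmem _).mpr (keyzero i)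
        rw [hbot] at hmemJ
        have h0 : (⟨cfc g (a i : H →L[ℂ] H), hmem i⟩ : A) = 0 := hmemJ
        exact congrArg Subtype.val h0
      have hub : ∀ i, (a i : H →L[ℂ] H) ≤ algebraMap ℝ (H →L[ℂ] H) l₂ := by
        intro i
        refine le_algebraMap_of_spectrum_le (fun x hx => ?_) (hpos i).isSelfAdjoint
        by_contra hgt
        push_neg at hgt
        have h1 : g x ∈ spectrum ℝ (cfc g (a i : H →L[ℂ] H)) := by
          rw [cfc_map_spectrum (f := g) (a := (a i : H →L[ℂ] H)) (hpos i).isSelfAdjoint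
            gcont.continuousOn]
          exact ⟨x, hx, rfl⟩
        rw [hr0 i, spectrum.zero_eq] at h1
        have h2 : g x = 0 := h1
        have h3 : (0:ℝ) < g x := gpos x hgt
        linarith
      have halg_sa : IsSelfAdjoint (algebraMap ℝ (H →L[ℂ] H) l₂) := by
        exact IsSelfAdjoint.algebraMap _ (star_trivial l₂)
      have hTle : T ≤ algebraMap ℝ (H →L[ℂ] H) l₂ := by
        rw [← sub_nonneg, ContinuousLinearMap.nonneg_iff_isPositive]
        refine isPositive_of_tendsto
          (b := fun i => algebraMap ℝ (H →L[ℂ] H) l₂ - (a i : H →L[ℂ] H))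
          (halg_sa.sub hTsa) (fun x => ?_) (fun x => ?_)
        · exact tendsto_const_nhds.sub (hconv x)
        · refine Filter.Eventually.of_forall (fun i => ?_)
          exact ((ContinuousLinearMap.nonneg_iff_isPositive _).mp (sub_nonneg.mpr (hub i))).2 x
      have := (le_algebraMap_iff_spectrum_le (R := ℝ) (a := T) hTsa).mp hTle t ht
      linarith
    · -- J = ⊤ : Q = 0, but h s = 1 belongs to the spectrum of Q
      have h1 : (1 : A) ∈ J := by rw [htop]; exact TwoSidedIdeal.mem_top _
      have hQ0 : Q = 0 := by
        have := (hJmem 1).mp h1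
        rwa [OneMemClass.coe_one, one_mul] at this
      have hmem1 : (1:ℝ) ∈ spectrum ℝ Q := by
        rw [hQ, cfc_map_spectrum (f := h) (a := T) hTsa hcont.continuousOn]
        exact ⟨s, hs, hs1⟩
      rw [hQ0, spectrum.zero_eq] at hmem1
      exact one_ne_zero hmem1
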